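/- For any connected graph H on h ≥ 1 vertices and any finite simple graph G, the number of graph homomorphisms from H to G is at most the number of homomorphisms from the star K_{1,h-1} to G; equivalently, hom(H,G) ≤ Σ_{v ∈ V(G)} d_v^{h-1}, where d_v is the degree of v in G. -/

import Mathlib

open Finset SimpleGraph
open scoped Classical

section SidorenkoAux

variable {VH VG : Type*} [Fintype VH] [Fintype VG]

lemma amgm_int (p q : ℤ) (b c : ℕ) (hp : 0 ≤ p) (hpq : p ≤ q) (hb : 1 ≤ b) (hc : 1 ≤ c) :
    ((b : ℤ) + c) * (p ^ b * q ^ c) ≤ b * p ^ (b + c) + c * q ^ (b + c) := by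
  have hq : 0 ≤ q := hp.trans hpq
  obtain ⟨b', rfl⟩ : ∃ b', b = b' + 1 := ⟨b - 1, by omega⟩
  obtain ⟨c', rfl⟩ : ∃ c', c = c' + 1 := ⟨c - 1, by omega⟩
  set b := b' + 1
  set c := c' + 1
  set A : ℤ := ∑ i ∈ Finset.range b, q ^ i * p ^ (b - 1 - i) with hA_def
  set B : ℤ := ∑ i ∈ Finset.range c, q ^ i * p ^ (c - 1 - i) with hB_def
  have hA : A * (q - p) = q ^ b - p ^ b := geom_sum₂_mul q p b
  have hB : B * (q - p) = q ^ c - p ^ c := geom_sum₂_mul q p c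
  have hA2 : (b : ℤ) * p ^ b' ≤ A := by
    calc (b : ℤ) * p ^ b' = ∑ _i ∈ Finset.range b, p ^ b' := by
          rw [Finset.sum_const, Finset.card_range, nsmul_eq_mul]
      _ ≤ A := by
          apply Finset.sum_le_sum
          intro i hi
          have hi' : i < b := Finset.mem_range.mp hi
          have h1 : p ^ b' = p ^ i * p ^ (b - 1 - i) := by
            rw [← pow_add]; congr 1; omega
          rw [h1]
          exact mul_le_mul_of_nonneg_right (pow_le_pow_left₀ hp hpq i) (pow_nonneg hp _)
  have hB2 : B ≤ (c : ℤ) * q ^ c' := by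
    calc B ≤ ∑ _i ∈ Finset.range c, q ^ c' := by
          apply Finset.sum_le_sum
          intro i hi
          have hi' : i < c := Finset.mem_range.mp hi
          have h1 : q ^ c' = q ^ i * q ^ (c - 1 - i) := by
            rw [← pow_add]; congr 1; omega
          rw [h1]
          exact mul_le_mul_of_nonneg_left (pow_le_pow_left₀ hp hpq _) (pow_nonneg hq _)
      _ = (c : ℤ) * q ^ c' := by
          rw [Finset.sum_const, Finset.card_range, nsmul_eq_mul]
  have hdiff : 0 ≤ (c : ℤ) * q ^ c * A - (b : ℤ) * p ^ b * B := by
    have l1 : (b : ℤ) * p ^ b * B ≤ (b : ℤ) * p ^ b * ((c : ℤ) * q ^ c') :=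
      mul_le_mul_of_nonneg_left hB2 (by positivity)
    have l2 : (c : ℤ) * q ^ c * ((b : ℤ) * p ^ b') ≤ (c : ℤ) * q ^ c * A :=
      mul_le_mul_of_nonneg_left hA2 (by positivity)
    have l3 : (b : ℤ) * p ^ b * ((c : ℤ) * q ^ c') ≤ (c : ℤ) * q ^ c * ((b : ℤ) * p ^ b') := by
      have hpow : p * (p ^ b' * q ^ c') ≤ q * (p ^ b' * q ^ c') :=
        mul_le_mul_of_nonneg_right hpq (by positivity)
      have e1 : (b : ℤ) * p ^ b * ((c : ℤ) * q ^ c') = (b : ℤ) * c * (p * (p ^ b' * q ^ c')) := by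
        rw [pow_succ]; ring
      have e2 : (c : ℤ) * q ^ c * ((b : ℤ) * p ^ b') = (b : ℤ) * c * (q * (p ^ b' * q ^ c')) := by
        rw [pow_succ]; ring
      rw [e1, e2]
      exact mul_le_mul_of_nonneg_left hpow (by positivity)
    linarith
  have hkey : 0 ≤ (q - p) * ((c : ℤ) * q ^ c * A - (b : ℤ) * p ^ b * B) :=
    mul_nonneg (by linarith) hdiff
  have hexp : (q - p) * ((c : ℤ) * q ^ c * A - (b : ℤ) * p ^ b * B)
      = (c : ℤ) * q ^ c * (q ^ b - p ^ b) - (b : ℤ) * p ^ b * (q ^ c - p ^ c) := by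
    rw [← hA, ← hB]; ring
  have hfin : (c : ℤ) * q ^ c * (q ^ b - p ^ b) - (b : ℤ) * p ^ b * (q ^ c - p ^ c)
      = (b : ℤ) * p ^ (b + c) + (c : ℤ) * q ^ (b + c) - ((b : ℤ) + c) * (p ^ b * q ^ c) := by
    rw [pow_add, pow_add]; ring
  linarith [hexp ▸ hkey]

lemma amgm_nat (p q b c : ℕ) (hb : 1 ≤ b) (hc : 1 ≤ c) :
    (b + c) * (p ^ b * q ^ c) ≤ b * p ^ (b + c) + c * q ^ (b + c) := by
  rcases le_total p q with h | h
  · have := amgm_int (p : ℤ) (q : ℤ) b c (by positivity) (by exact_mod_cast h) hb hc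
    exact_mod_cast this
  · have := amgm_int (q : ℤ) (p : ℤ) c b (by positivity) (by exact_mod_cast h) hc hb
    have h2 : ((c : ℤ) + b) * ((q:ℤ) ^ c * (p:ℤ) ^ b) ≤ c * (q:ℤ) ^ (c + b) + b * (p:ℤ) ^ (c + b) :=
      this
    have h3 : ((b : ℤ) + c) * ((p:ℤ) ^ b * (q:ℤ) ^ c) ≤ b * (p:ℤ) ^ (b + c) + c * (q:ℤ) ^ (b + c) := by
      rw [add_comm b c] at *
      linarith [h2]
    exact_mod_cast h3

noncomputable def Funs (G : SimpleGraph VG) (g0 : VH → VG) (s : Finset VH) (r : VH)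
    (par : VH → VH) : Finset (VH → VG) :=
  Finset.univ.filter fun f =>
    (∀ v ∈ s, v ≠ r → G.Adj (f (par v)) (f v)) ∧ ∀ x, x ∉ s → f x = g0 x

noncomputable def SS (G : SimpleGraph VG) (g0 : VH → VG) (s : Finset VH) (r : VH)
    (par : VH → VH) (m : VH → ℕ) : ℕ :=
  ∑ f ∈ Funs G g0 s r par, ∏ v ∈ s, (G.degree (f v)) ^ (m v)

lemma SS_singleton (G : SimpleGraph VG) (g0 : VH → VG) (r : VH) (par : VH → VH) (m : VH → ℕ) :
    SS G g0 {r} r par m = ∑ u : VG, G.degree u ^ m r := by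
  unfold SS
  refine Finset.sum_bij' (i := fun f _ => f r) (j := fun u _ => Function.update g0 r u)
    ?_ ?_ ?_ ?_ ?_
  · intro f hf
    exact Finset.mem_univ _
  · intro u _
    simp only [Funs, Finset.mem_filter, Finset.mem_univ, true_and]
    constructor
    · intro v hv hvr
      exact absurd (Finset.mem_singleton.mp hv) hvr
    · intro x hx
      exact Function.update_of_ne (fun h => hx (by simp [h])) _ _
  · intro f hf
    simp only [Funs, Finset.mem_filter] at hf
    funext x
    show Function.update g0 r (f r) x = f x
    by_cases hx : x = r
    · subst hx; simp
    · rw [Function.update_of_ne hx]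
      exact (hf.2.2 x (by simp [hx])).symm
  · intro u _
    simp
  · intro f hf
    simp

lemma SS_remove (G : SimpleGraph VG) (g0 : VH → VG) (s : Finset VH) (r r' : VH)
    (par : VH → VH) (m : VH → ℕ) (l q : VH) (hl : l ∈ s) (hq : q ∈ s.erase l)
    (hnp : ∀ v ∈ s.erase l, v ≠ r' → par v ≠ l)
    (hiff : ∀ f : VH → VG, (∀ v ∈ s, v ≠ r → G.Adj (f (par v)) (f v)) ↔
      ((∀ v ∈ s.erase l, v ≠ r' → G.Adj (f (par v)) (f v)) ∧ G.Adj (f q) (f l))) :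
    SS G g0 s r par m =
      ∑ g ∈ Funs G g0 (s.erase l) r' par,
        (∏ v ∈ s.erase l, G.degree (g v) ^ m v) *
          ∑ w ∈ G.neighborFinset (g q), G.degree w ^ m l := by
  have hql : q ≠ l := (Finset.mem_erase.mp hq).1
  unfold SS
  have hrhs :
      ∑ g ∈ Funs G g0 (s.erase l) r' par,
        (∏ v ∈ s.erase l, G.degree (g v) ^ m v) *
          ∑ w ∈ G.neighborFinset (g q), G.degree w ^ m l
      = ∑ p ∈ (Funs G g0 (s.erase l) r' par).sigma (fun g => G.neighborFinset (g q)),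
          (∏ v ∈ s.erase l, G.degree (p.1 v) ^ m v) * G.degree p.2 ^ m l := by
    rw [Finset.sum_sigma]
    exact Finset.sum_congr rfl fun g _ => by rw [Finset.mul_sum]
  rw [hrhs]
  refine Finset.sum_bij'
    (i := fun f _ => (⟨Function.update f l (g0 l), f l⟩ :
      (_ : VH → VG) × VG))
    (j := fun p _ => Function.update p.1 l p.2) ?_ ?_ ?_ ?_ ?_
  · -- i maps into sigma set
    intro f hf
    simp only [Funs, Finset.mem_filter, Finset.mem_univ, true_and] at hf
    have hcon := (hiff f).mp hf.1
    simp only [Finset.mem_sigma, Funs, Finset.mem_filter, Finset.mem_univ, true_and]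
    refine ⟨⟨?_, ?_⟩, ?_⟩
    · intro v hv hvr'
      have hvl : v ≠ l := (Finset.mem_erase.mp hv).1
      rw [Function.update_of_ne (hnp v hv hvr'), Function.update_of_ne hvl]
      exact hcon.1 v hv hvr'
    · intro x hx
      by_cases hxl : x = l
      · subst hxl; simp
      · rw [Function.update_of_ne hxl]
        exact hf.2 x (by simp only [Finset.mem_erase] at hx; tauto)
    · rw [SimpleGraph.mem_neighborFinset]
      rw [Function.update_of_ne hql]
      exact hcon.2
  · -- j maps into Funs s
    intro p hp
    simp only [Finset.mem_sigma, Funs, Finset.mem_filter, Finset.mem_univ, true_and] at hp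
    obtain ⟨⟨hcon, hjunk⟩, hw⟩ := hp
    simp only [Funs, Finset.mem_filter, Finset.mem_univ, true_and]
    constructor
    · rw [hiff]
      constructor
      · intro v hv hvr'
        have hvl : v ≠ l := (Finset.mem_erase.mp hv).1
        rw [Function.update_of_ne (hnp v hv hvr'), Function.update_of_ne hvl]
        exact hcon v hv hvr'
      · rw [Function.update_of_ne hql, Function.update_self]
        exact (SimpleGraph.mem_neighborFinset _ _ _).mp hw
    · intro x hx
      have hxl : x ≠ l := fun h => hx (h ▸ hl)
      rw [Function.update_of_ne hxl]
      exact hjunk x fun hmem => hx (Finset.mem_of_mem_erase hmem)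
  · -- left inverse
    intro f hf
    show Function.update (Function.update f l (g0 l)) l (f l) = f
    rw [Function.update_idem, Function.update_eq_self]
  · -- right inverse
    intro p hp
    simp only [Finset.mem_sigma, Funs, Finset.mem_filter, Finset.mem_univ, true_and] at hp
    show (⟨Function.update (Function.update p.1 l p.2) l (g0 l),
        Function.update p.1 l p.2 l⟩ : (_ : VH → VG) × VG) = p
    obtain ⟨⟨hcon, hjunk⟩, _⟩ := hp
    have h1 : Function.update (Function.update p.1 l p.2) l (g0 l) = p.1 := by
      rw [Function.update_idem]
      have : p.1 l = g0 l := hjunk l (by simp)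
      rw [← this, Function.update_eq_self]
    have h2 : Function.update p.1 l p.2 l = p.2 := Function.update_self _ _ _
    have : p = ⟨p.1, p.2⟩ := rfl
    rw [this]
    rw [Sigma.mk.inj_iff]
    exact ⟨h1, heq_of_eq h2⟩
  · -- values agree
    intro f hf
    rw [← Finset.mul_prod_erase s _ hl, mul_comm]
    congr 1
    · apply Finset.prod_congr rfl
      intro v hv
      show _ = G.degree (Function.update f l (g0 l) v) ^ m v
      rw [Function.update_of_ne (Finset.mem_erase.mp hv).1]

lemma SS_remove_zero (G : SimpleGraph VG) (g0 : VH → VG) (s : Finset VH) (r r' : VH)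
    (par : VH → VH) (m : VH → ℕ) (l q : VH) (hl : l ∈ s) (hq : q ∈ s.erase l)
    (hnp : ∀ v ∈ s.erase l, v ≠ r' → par v ≠ l)
    (hiff : ∀ f : VH → VG, (∀ v ∈ s, v ≠ r → G.Adj (f (par v)) (f v)) ↔
      ((∀ v ∈ s.erase l, v ≠ r' → G.Adj (f (par v)) (f v)) ∧ G.Adj (f q) (f l)))
    (hml : m l = 0) :
    SS G g0 s r par m = SS G g0 (s.erase l) r' par (Function.update m q (m q + 1)) := by
  rw [SS_remove G g0 s r r' par m l q hl hq hnp hiff]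
  unfold SS
  apply Finset.sum_congr rfl
  intro g _
  have h1 : ∑ w ∈ G.neighborFinset (g q), G.degree w ^ m l = G.degree (g q) := by
    simp [hml]
  rw [h1]
  have h2 : ∏ v ∈ s.erase l, G.degree (g v) ^ Function.update m q (m q + 1) v
      = G.degree (g q) ^ (m q + 1) * ∏ v ∈ (s.erase l).erase q, G.degree (g v) ^ m v := by
    rw [← Finset.mul_prod_erase _ _ hq]
    congr 1
    · rw [Function.update_self]
    · apply Finset.prod_congr rfl
      intro v hv
      rw [Function.update_of_ne (Finset.mem_erase.mp hv).1]
  have h3 : ∏ v ∈ s.erase l, G.degree (g v) ^ m v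
      = G.degree (g q) ^ m q * ∏ v ∈ (s.erase l).erase q, G.degree (g v) ^ m v :=
    (Finset.mul_prod_erase _ _ hq).symm
  rw [h2, h3, pow_succ]
  ring

lemma SS_transfer (G : SimpleGraph VG) (g0 : VH → VG) (s : Finset VH) (r : VH)
    (par : VH → VH) (m : VH → ℕ) (x y : VH) (hx : x ∈ s) (hy : y ∈ s.erase x)
    (hmx : 1 ≤ m x) (hmy : 1 ≤ m y) :
    (m x + m y) * SS G g0 s r par m ≤
      m x * SS G g0 s r par (Function.update (Function.update m x (m x + m y)) y 0)
      + m y * SS G g0 s r par (Function.update (Function.update m x 0) y (m x + m y)) := by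
  have hxy : y ≠ x := (Finset.mem_erase.mp hy).1
  unfold SS
  rw [Finset.mul_sum, Finset.mul_sum, Finset.mul_sum, ← Finset.sum_add_distrib]
  apply Finset.sum_le_sum
  intro f _
  set A := G.degree (f x)
  set B := G.degree (f y)
  set P := ∏ v ∈ (s.erase x).erase y, G.degree (f v) ^ m v with hP
  have decomp : ∀ mm : VH → ℕ, (∀ v ∈ (s.erase x).erase y, mm v = m v) →
      ∏ v ∈ s, G.degree (f v) ^ mm v
        = A ^ mm x * (B ^ mm y * ∏ v ∈ (s.erase x).erase y, G.degree (f v) ^ mm v) := by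
    intro mm _
    rw [← Finset.mul_prod_erase s _ hx, ← Finset.mul_prod_erase _ _ hy]
  have e0 : ∏ v ∈ s, G.degree (f v) ^ m v = A ^ m x * (B ^ m y * P) := decomp m fun _ _ => rfl
  have hsame1 : ∀ v ∈ (s.erase x).erase y,
      Function.update (Function.update m x (m x + m y)) y 0 v = m v := by
    intro v hv
    have h1 := (Finset.mem_erase.mp hv).1
    have hvx : v ≠ x := (Finset.mem_erase.mp (Finset.mem_of_mem_erase hv)).1
    rw [Function.update_of_ne h1, Function.update_of_ne hvx]
  have hsame2 : ∀ v ∈ (s.erase x).erase y,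
      Function.update (Function.update m x 0) y (m x + m y) v = m v := by
    intro v hv
    have h1 := (Finset.mem_erase.mp hv).1
    have hvx : v ≠ x := (Finset.mem_erase.mp (Finset.mem_of_mem_erase hv)).1
    rw [Function.update_of_ne h1, Function.update_of_ne hvx]
  have e1 : ∏ v ∈ s, G.degree (f v) ^ Function.update (Function.update m x (m x + m y)) y 0 v
      = A ^ (m x + m y) * (B ^ 0 * P) := by
    rw [decomp _ hsame1]
    congr 1
    · rw [Function.update_of_ne hxy.symm, Function.update_self]
    congr 1
    · rw [Function.update_self]
    · rw [hP]; exact Finset.prod_congr rfl fun v hv => by rw [hsame1 v hv]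
  have e2 : ∏ v ∈ s, G.degree (f v) ^ Function.update (Function.update m x 0) y (m x + m y) v
      = A ^ 0 * (B ^ (m x + m y) * P) := by
    rw [decomp _ hsame2]
    congr 1
    · rw [Function.update_of_ne hxy.symm, Function.update_self]
    congr 1
    · rw [Function.update_self]
    · rw [hP]; exact Finset.prod_congr rfl fun v hv => by rw [hsame2 v hv]
  rw [e0, e1, e2]
  have key := amgm_nat A B (m x) (m y) hmx hmy
  calc (m x + m y) * (A ^ m x * (B ^ m y * P))
      = ((m x + m y) * (A ^ m x * B ^ m y)) * P := by ring
    _ ≤ (m x * A ^ (m x + m y) + m y * B ^ (m x + m y)) * P :=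
        Nat.mul_le_mul_right P key
    _ = m x * (A ^ (m x + m y) * (B ^ 0 * P)) + m y * (A ^ 0 * (B ^ (m x + m y) * P)) := by
        ring

lemma sum_update_mem {α : Type*} (s : Finset α) (i : α) (h : i ∈ s) (f : α → ℕ) (b : ℕ) :
    ∑ x ∈ s, Function.update f i b x = b + ∑ x ∈ s.erase i, f x := by
  classical
  rw [Finset.erase_eq]
  exact Finset.sum_update_of_mem h f b

lemma main_ind (G : SimpleGraph VG) (g0 : VH → VG) :
    ∀ (N : ℕ) (s : Finset VH) (r : VH) (par : VH → VH) (ρ : VH → ℕ) (m : VH → ℕ),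
      s.card * (Fintype.card VH + 1) + (s.filter fun v => 0 < m v).card ≤ N →
      r ∈ s →
      (∀ v ∈ s, v ≠ r → par v ∈ s) →
      (∀ v ∈ s, v ≠ r → ρ (par v) < ρ v) →
      SS G g0 s r par m ≤ ∑ u : VG, G.degree u ^ (s.card - 1 + ∑ v ∈ s, m v) := by
  intro N
  induction N with
  | zero =>
    intro s r par ρ m hμ hr _ _
    have h1 : 1 ≤ s.card := Finset.card_pos.mpr ⟨r, hr⟩
    have h2 : 1 ≤ s.card * (Fintype.card VH + 1) := Nat.one_le_iff_ne_zero.mpr (by positivity)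
    omega
  | succ N ih =>
    intro s r par ρ m hμ hr hpar hρ
    by_cases hcard : s.card ≤ 1
    · -- base case : s = {r}
      have h1 : s.card = 1 := le_antisymm hcard (Finset.card_pos.mpr ⟨r, hr⟩)
      obtain ⟨a, ha⟩ := Finset.card_eq_one.mp h1
      have har : a = r := by
        have := hr; rw [ha] at this; exact (Finset.mem_singleton.mp this).symm
      subst har
      subst ha
      rw [SS_singleton]
      apply le_of_eq
      congr 1
      funext u
      congr 1
      simp
    -- now s.card ≥ 2
    push_neg at hcard
    have hC : s.card ≤ Fintype.card VH := s.card_le_univ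
    have hTne : (s.erase r).Nonempty := by
      rw [← Finset.card_pos, Finset.card_erase_of_mem hr]; omega
    by_cases hA : ∃ l0 ∈ s.erase r, (∀ w ∈ s, w ≠ r → par w ≠ l0) ∧ m l0 = 0
    · -- MOVE (i) : remove a zero-weight leaf l0
      obtain ⟨l0, hl0T, hleaf0, hml0⟩ := hA
      have hl0s : l0 ∈ s := Finset.mem_of_mem_erase hl0T
      have hl0r : l0 ≠ r := (Finset.mem_erase.mp hl0T).1
      have hqs : par l0 ∈ s := hpar l0 hl0s hl0r
      have hqnl : par l0 ≠ l0 := fun h => absurd (hρ l0 hl0s hl0r) (by rw [h]; exact lt_irrefl _)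
      have hq : par l0 ∈ s.erase l0 := Finset.mem_erase.mpr ⟨hqnl, hqs⟩
      have hiff : ∀ f : VH → VG, (∀ v ∈ s, v ≠ r → G.Adj (f (par v)) (f v)) ↔
          ((∀ v ∈ s.erase l0, v ≠ r → G.Adj (f (par v)) (f v)) ∧
            G.Adj (f (par l0)) (f l0)) := by
        intro f
        constructor
        · intro hcon
          exact ⟨fun v hv hvr => hcon v (Finset.mem_of_mem_erase hv) hvr, hcon l0 hl0s hl0r⟩
        · rintro ⟨h1, h2⟩ v hv hvr
          by_cases hvl : v = l0
          · subst hvl; exact h2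
          · exact h1 v (Finset.mem_erase.mpr ⟨hvl, hv⟩) hvr
      rw [SS_remove_zero G g0 s r r par m l0 (par l0) hl0s hq
        (fun v hv hvr => hleaf0 v (Finset.mem_of_mem_erase hv) hvr) hiff hml0]
      set m' := Function.update m (par l0) (m (par l0) + 1) with hm'
      -- apply ih
      have hrec := ih (s.erase l0) r par ρ m' ?_ ?_ ?_ ?_
      · refine hrec.trans (le_of_eq ?_)
        have hce : (s.erase l0).card = s.card - 1 := Finset.card_erase_of_mem hl0s
        have hs1 : ∑ v ∈ s.erase l0, m' v
            = (m (par l0) + 1) + ∑ v ∈ (s.erase l0).erase (par l0), m v := by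
          rw [hm']; exact sum_update_mem _ _ hq _ _
        have hs2 : m (par l0) + ∑ v ∈ (s.erase l0).erase (par l0), m v
            = ∑ v ∈ s.erase l0, m v := Finset.add_sum_erase _ _ hq
        have hs3 : m l0 + ∑ v ∈ s.erase l0, m v = ∑ v ∈ s, m v :=
          Finset.add_sum_erase _ _ hl0s
        have hexp : (s.erase l0).card - 1 + ∑ v ∈ s.erase l0, m' v
            = s.card - 1 + ∑ v ∈ s, m v := by omega
        rw [hexp]
      · -- measure
        have hce : (s.erase l0).card = s.card - 1 := Finset.card_erase_of_mem hl0s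
        have hpc : ((s.erase l0).filter fun v => 0 < m' v).card ≤ (s.erase l0).card :=
          Finset.card_filter_le _ _
        rw [hce] at hpc ⊢
        have hmul : (s.card - 1) * (Fintype.card VH + 1) + (Fintype.card VH + 1)
            = s.card * (Fintype.card VH + 1) := by
          have h2 : s.card - 1 + 1 = s.card := by omega
          calc (s.card - 1) * (Fintype.card VH + 1) + (Fintype.card VH + 1)
              = (s.card - 1 + 1) * (Fintype.card VH + 1) := by ring
            _ = s.card * (Fintype.card VH + 1) := by rw [h2]
        omega
      · exact Finset.mem_erase.mpr ⟨fun h => hl0r h.symm, hr⟩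
      · intro v hv hvr
        exact Finset.mem_erase.mpr ⟨hleaf0 v (Finset.mem_of_mem_erase hv) hvr,
          hpar v (Finset.mem_of_mem_erase hv) hvr⟩
      · intro v hv hvr
        exact hρ v (Finset.mem_of_mem_erase hv) hvr
    · -- no zero-weight leaf
      obtain ⟨l, hlT, hlmax⟩ := Finset.exists_max_image (s.erase r) ρ hTne
      have hls : l ∈ s := Finset.mem_of_mem_erase hlT
      have hlr : l ≠ r := (Finset.mem_erase.mp hlT).1
      have hleaf : ∀ w ∈ s, w ≠ r → par w ≠ l := by
        intro w hw hwr hpw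
        have h1 : ρ (par w) < ρ w := hρ w hw hwr
        have h2 : ρ w ≤ ρ l := hlmax w (Finset.mem_erase.mpr ⟨hwr, hw⟩)
        rw [hpw] at h1; omega
      have hml : 1 ≤ m l := by
        by_contra hml
        exact hA ⟨l, hlT, hleaf, by omega⟩
      by_cases hB1 : ∃ y ∈ s.erase l, 1 ≤ m y
      · -- MOVE (ii) : transfer weight between l and y
        obtain ⟨y, hy, hmy⟩ := hB1
        have hys : y ∈ s := Finset.mem_of_mem_erase hy
        have hyl : y ≠ l := (Finset.mem_erase.mp hy).1
        set m1 := Function.update (Function.update m l (m l + m y)) y 0 with hm1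
        set m2 := Function.update (Function.update m l 0) y (m l + m y) with hm2
        have key := SS_transfer G g0 s r par m l y hls hy hml hmy
        have hyse : l ∈ s.erase y := Finset.mem_erase.mpr ⟨fun h => hyl h.symm, hls⟩
        -- weight sums preserved
        have hsA : ∑ v ∈ s, m1 v = 0 + ∑ v ∈ s.erase y, Function.update m l (m l + m y) v := by
          rw [hm1]; exact sum_update_mem _ _ hys _ _
        have hsB : ∑ v ∈ s.erase y, Function.update m l (m l + m y) v
            = (m l + m y) + ∑ v ∈ (s.erase y).erase l, m v :=
          sum_update_mem _ _ hyse _ _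
        have hsC : ∑ v ∈ s, m2 v
            = (m l + m y) + ∑ v ∈ s.erase y, Function.update m l 0 v := by
          rw [hm2]; exact sum_update_mem _ _ hys _ _
        have hsD : ∑ v ∈ s.erase y, Function.update m l 0 v
            = 0 + ∑ v ∈ (s.erase y).erase l, m v := sum_update_mem _ _ hyse _ _
        have hsE : m y + ∑ v ∈ s.erase y, m v = ∑ v ∈ s, m v :=
          Finset.add_sum_erase _ _ hys
        have hsF : m l + ∑ v ∈ (s.erase y).erase l, m v = ∑ v ∈ s.erase y, m v :=
          Finset.add_sum_erase _ _ hyse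
        have hsum1 : ∑ v ∈ s, m1 v = ∑ v ∈ s, m v := by omega
        have hsum2 : ∑ v ∈ s, m2 v = ∑ v ∈ s, m v := by omega
        -- positive-weight counts decrease
        have hfilter : ∀ mm : VH → ℕ, (∀ v ∈ s, 0 < mm v → 0 < m v) →
            (∃ w ∈ s, 0 < m w ∧ mm w = 0) →
            (s.filter fun v => 0 < mm v).card < (s.filter fun v => 0 < m v).card := by
          intro mm hsub ⟨w, hws, hw1, hw2⟩
          apply Finset.card_lt_card
          constructor
          · intro v hv
            rw [Finset.mem_filter] at hv ⊢
            exact ⟨hv.1, hsub v hv.1 hv.2⟩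
          · intro hcon
            have hw : w ∈ s.filter fun v => 0 < m v := Finset.mem_filter.mpr ⟨hws, hw1⟩
            have := hcon hw
            rw [Finset.mem_filter] at this
            omega
        have hpc1 : (s.filter fun v => 0 < m1 v).card < (s.filter fun v => 0 < m v).card := by
          apply hfilter
          · intro v _ hv
            rw [hm1] at hv
            by_cases h1 : v = y
            · subst h1; rw [Function.update_self] at hv; omega
            by_cases h2 : v = l
            · subst h2; omega
            · rwa [Function.update_of_ne h1, Function.update_of_ne h2] at hv
          · exact ⟨y, hys, hmy, by rw [hm1, Function.update_self]⟩
        have hpc2 : (s.filter fun v => 0 < m2 v).card < (s.filter fun v => 0 < m v).card := by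
          apply hfilter
          · intro v _ hv
            rw [hm2] at hv
            by_cases h1 : v = y
            · subst h1; omega
            by_cases h2 : v = l
            · subst h2; omega
            · rwa [Function.update_of_ne h1, Function.update_of_ne h2] at hv
          · exact ⟨l, hls, hml, by
              rw [hm2, Function.update_of_ne hyl.symm, Function.update_self]⟩
        have ih1 := ih s r par ρ m1 (by omega) hr hpar hρ
        have ih2 := ih s r par ρ m2 (by omega) hr hpar hρ
        rw [hsum1] at ih1
        rw [hsum2] at ih2
        set R := ∑ u : VG, G.degree u ^ (s.card - 1 + ∑ v ∈ s, m v) with hR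
        have hfin : (m l + m y) * SS G g0 s r par m ≤ (m l + m y) * R := by
          calc (m l + m y) * SS G g0 s r par m
              ≤ m l * SS G g0 s r par m1 + m y * SS G g0 s r par m2 := key
            _ ≤ m l * R + m y * R :=
                Nat.add_le_add (Nat.mul_le_mul_left _ ih1) (Nat.mul_le_mul_left _ ih2)
            _ = (m l + m y) * R := by ring
        exact Nat.le_of_mul_le_mul_left hfin (by omega)
      · -- MOVE (iv) : s is a path towards root; remove root
        push_neg at hB1
        have hzero : ∀ y ∈ s, y ≠ l → m y = 0 := by
          intro y hy hyl
          have := hB1 y (Finset.mem_erase.mpr ⟨hyl, hy⟩)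
          omega
        -- all leaves equal l
        have huniq : ∀ l' ∈ s.erase r, (∀ w ∈ s, w ≠ r → par w ≠ l') → l' = l := by
          intro l' h1 h2
          by_contra hne
          exact hA ⟨l', h1, h2, hzero l' (Finset.mem_of_mem_erase h1) hne⟩
        set T := s.erase r with hT
        set L := T.filter (fun v => ∀ w ∈ s, w ≠ r → par w ≠ v) with hL
        have hLl : L = {l} := by
          ext v
          rw [hL, Finset.mem_filter, Finset.mem_singleton]
          constructor
          · rintro ⟨h1, h2⟩; exact huniq v h1 h2
          · rintro rfl; exact ⟨hlT, hleaf⟩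
        have himg_r : r ∈ T.image par := by
          obtain ⟨v0, hv0, hmin⟩ := Finset.exists_min_image T ρ hTne
          have hv0s : v0 ∈ s := Finset.mem_of_mem_erase hv0
          have hv0r : v0 ≠ r := (Finset.mem_erase.mp hv0).1
          have hpv0 : par v0 = r := by
            by_contra hne
            have h1 : par v0 ∈ T := Finset.mem_erase.mpr ⟨hne, hpar v0 hv0s hv0r⟩
            have h2 := hmin (par v0) h1
            have h3 := hρ v0 hv0s hv0r
            omega
          exact Finset.mem_image.mpr ⟨v0, hv0, hpv0⟩
        have hsub : T \ L ⊆ (T.image par).erase r := by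
          intro v hv
          rw [Finset.mem_sdiff] at hv
          obtain ⟨hvT, hvL⟩ := hv
          rw [hL, Finset.mem_filter] at hvL
          push_neg at hvL
          obtain ⟨w, hw, hwr, hpw⟩ := hvL hvT
          refine Finset.mem_erase.mpr ⟨(Finset.mem_erase.mp hvT).1, ?_⟩
          exact Finset.mem_image.mpr ⟨w, Finset.mem_erase.mpr ⟨hwr, hw⟩, hpw⟩
        have hinj : Set.InjOn par ↑T := by
          rw [← Finset.card_image_iff]
          have hLsub : L ⊆ T := Finset.filter_subset _ _
          have h1 : (T \ L).card = T.card - 1 := by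
            rw [Finset.card_sdiff_of_subset hLsub, hLl, Finset.card_singleton]
          have h2 : ((T.image par).erase r).card = (T.image par).card - 1 :=
            Finset.card_erase_of_mem himg_r
          have h3 := Finset.card_le_card hsub
          have h4 := Finset.card_image_le (s := T) (f := par)
          have h5 : 1 ≤ T.card := Finset.card_pos.mpr hTne
          have h6 : 1 ≤ (T.image par).card := Finset.card_pos.mpr ⟨r, himg_r⟩
          omega
        obtain ⟨c, hcT, hpc⟩ := Finset.mem_image.mp himg_r
        have hconly : ∀ v ∈ T, par v = r → v = c := by
          intro v hv hpv
          exact hinj (by exact_mod_cast hv) (by exact_mod_cast hcT) (by rw [hpv, hpc])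
        have hmr : m r = 0 := hzero r hr (fun h => hlr h.symm)
        have hiff : ∀ f : VH → VG, (∀ v ∈ s, v ≠ r → G.Adj (f (par v)) (f v)) ↔
            ((∀ v ∈ s.erase r, v ≠ c → G.Adj (f (par v)) (f v)) ∧ G.Adj (f c) (f r)) := by
          intro f
          constructor
          · intro hcon
            refine ⟨fun v hv hvc => hcon v (Finset.mem_of_mem_erase hv)
              (Finset.mem_erase.mp hv).1, ?_⟩
            have := hcon c (Finset.mem_of_mem_erase hcT) (Finset.mem_erase.mp hcT).1
            rw [hpc] at this
            exact this.symm
          · rintro ⟨h1, h2⟩ v hv hvr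
            by_cases hvc : v = c
            · subst hvc; rw [hpc]; exact h2.symm
            · exact h1 v (Finset.mem_erase.mpr ⟨hvr, hv⟩) hvc
        rw [SS_remove_zero G g0 s r c par m r c hr hcT
          (fun v hv hvc h => hvc (hconly v hv h)) hiff hmr]
        set m' := Function.update m c (m c + 1) with hm'
        have hrec := ih (s.erase r) c par ρ m' ?_ ?_ ?_ ?_
        · refine hrec.trans (le_of_eq ?_)
          have hce : (s.erase r).card = s.card - 1 := Finset.card_erase_of_mem hr
          have hs1 : ∑ v ∈ s.erase r, m' v
              = (m c + 1) + ∑ v ∈ (s.erase r).erase c, m v := by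
            rw [hm']; exact sum_update_mem _ _ hcT _ _
          have hs2 : m c + ∑ v ∈ (s.erase r).erase c, m v
              = ∑ v ∈ s.erase r, m v := Finset.add_sum_erase _ _ hcT
          have hs3 : m r + ∑ v ∈ s.erase r, m v = ∑ v ∈ s, m v :=
            Finset.add_sum_erase _ _ hr
          have hexp : (s.erase r).card - 1 + ∑ v ∈ s.erase r, m' v
              = s.card - 1 + ∑ v ∈ s, m v := by omega
          rw [hexp]
        · have hce : (s.erase r).card = s.card - 1 := Finset.card_erase_of_mem hr
          have hpc2 : ((s.erase r).filter fun v => 0 < m' v).card ≤ (s.erase r).card :=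
            Finset.card_filter_le _ _
          rw [hce] at hpc2 ⊢
          have hmul : (s.card - 1) * (Fintype.card VH + 1) + (Fintype.card VH + 1)
              = s.card * (Fintype.card VH + 1) := by
            have h2 : s.card - 1 + 1 = s.card := by omega
            calc (s.card - 1) * (Fintype.card VH + 1) + (Fintype.card VH + 1)
                = (s.card - 1 + 1) * (Fintype.card VH + 1) := by ring
              _ = s.card * (Fintype.card VH + 1) := by rw [h2]
          omega
        · exact hcT
        · intro v hv hvc
          have hvs : v ∈ s := Finset.mem_of_mem_erase hv
          have hvr : v ≠ r := (Finset.mem_erase.mp hv).1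
          refine Finset.mem_erase.mpr ⟨?_, hpar v hvs hvr⟩
          intro h
          exact hvc (hconly v hv h)
        · intro v hv hvc
          exact hρ v (Finset.mem_of_mem_erase hv) (Finset.mem_erase.mp hv).1

end SidorenkoAux

/-- Sidorenko's inequality: for a connected graph `H` on `h ≥ 1` vertices and any
finite graph `G`, the number of homomorphisms `H → G` is at most
`∑ v, d_v ^ (h-1)` (which equals `hom(K_{1,h-1}, G)`). -/
theorem sidorenko_hom_le_star
    {VH VG : Type*} [Fintype VH] [Fintype VG]
    (H : SimpleGraph VH) (G : SimpleGraph VG)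
    (h : ℕ) (hh : 1 ≤ h) (hcard : Fintype.card VH = h)
    (hconn : H.Connected) :
    (Finset.univ.filter
      (fun f : VH → VG => ∀ a b, H.Adj a b → G.Adj (f a) (f b))).card
      ≤ ∑ v : VG, (G.degree v) ^ (h - 1) := by
  have hVH : Nonempty VH := Fintype.card_pos_iff.mp (by omega)
  rcases isEmpty_or_nonempty VG with hGe | hGn
  · have hEmpty : IsEmpty (VH → VG) := ⟨fun f => (hGe.false (f (Classical.arbitrary VH))).elim⟩
    have : (Finset.univ : Finset (VH → VG)) = ∅ := Finset.univ_eq_empty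
    rw [Finset.filter_congr_decidable, this, Finset.filter_empty, Finset.card_empty]
    exact Nat.zero_le _
  · set g0 : VH → VG := fun _ => Classical.arbitrary VG with hg0
    set r : VH := Classical.arbitrary VH with hrdef
    have hpar_ex : ∀ v : VH, v ≠ r → ∃ u, H.Adj u v ∧ H.dist u r < H.dist v r := by
      intro v hv
      have hreach : H.Reachable v r := hconn v r
      obtain ⟨p, hp⟩ := hreach.exists_walk_length_eq_dist
      have hpos : 0 < H.dist v r := hconn.pos_dist_of_ne hv
      cases p with
      | nil => rw [SimpleGraph.Walk.length_nil] at hp; omega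
      | cons hadj p' =>
        rename_i u
        refine ⟨u, hadj.symm, ?_⟩
        have h1 : H.dist u r ≤ p'.length := SimpleGraph.dist_le p'
        rw [SimpleGraph.Walk.length_cons] at hp
        omega
    set par : VH → VH := fun v =>
      if hv : v = r then v else Classical.choose (hpar_ex v hv) with hpardef
    have hparadj : ∀ v : VH, v ≠ r → H.Adj (par v) v := by
      intro v hv
      rw [hpardef]
      simp only [dif_neg hv]
      exact (Classical.choose_spec (hpar_ex v hv)).1
    have hρ : ∀ v : VH, v ≠ r → H.dist (par v) r < H.dist v r := by
      intro v hv
      rw [hpardef]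
      simp only [dif_neg hv]
      exact (Classical.choose_spec (hpar_ex v hv)).2
    -- the homomorphism set is contained in Funs
    have hsubset : (Finset.univ.filter
        (fun f : VH → VG => ∀ a b, H.Adj a b → G.Adj (f a) (f b)))
        ⊆ Funs G g0 Finset.univ r par := by
      intro f hf
      rw [Finset.mem_filter] at hf
      rw [Funs, Finset.mem_filter]
      refine ⟨Finset.mem_univ _, fun v _ hvr => hf.2 _ _ (hparadj v hvr), fun x hx => ?_⟩
      exact absurd (Finset.mem_univ x) hx
    have hcount : (Finset.univ.filter
        (fun f : VH → VG => ∀ a b, H.Adj a b → G.Adj (f a) (f b))).card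
        ≤ SS G g0 Finset.univ r par (fun _ => 0) := by
      unfold SS
      calc (Finset.univ.filter
          (fun f : VH → VG => ∀ a b, H.Adj a b → G.Adj (f a) (f b))).card
          ≤ (Funs G g0 Finset.univ r par).card := Finset.card_le_card hsubset
        _ = ∑ f ∈ Funs G g0 Finset.univ r par, ∏ v ∈ Finset.univ, (G.degree (f v)) ^ (0 : ℕ) := by
            simp
    refine hcount.trans ?_
    have hmain := main_ind G g0
      ((Finset.univ : Finset VH).card * (Fintype.card VH + 1) +
        ((Finset.univ : Finset VH).filter fun v => 0 < (0:ℕ)).card)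
      Finset.univ r par (fun v => H.dist v r) (fun _ => 0)
      le_rfl (Finset.mem_univ r)
      (fun v _ _ => Finset.mem_univ _)
      (fun v _ hvr => hρ v hvr)
    simpa [Finset.card_univ, hcard] using hmain
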